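/- If 1 < θ < 17 and x* > 0 is a fixed point of f(x) = L((1+x)/(1+θ+2x))², then |f'(x*)| < 1. -/

import Mathlib

theorem fixed_point_attracting_theta_between_one_seventeen (θ L : ℝ)
    (hθ1 : 1 < θ) (hθ17 : θ < 17) (hL : 0 < L)
    (f : ℝ → ℝ) (hf : ∀ x : ℝ, f x = L * ((1 + x) / (1 + θ + 2 * x)) ^ 2)
    (x : ℝ) (hx : 0 < x) (hfix : f x = x) :
    |deriv f x| < 1 := by
  have hD : (0:ℝ) < 1 + θ + 2 * x := by nlinarith
  have hDne : (1 + θ + 2 * x) ≠ 0 := ne_of_gt hD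
  have h1 : HasDerivAt (fun y : ℝ => 1 + y) 1 x := by
    simpa using (hasDerivAt_id x).const_add 1
  have h2 : HasDerivAt (fun y : ℝ => 1 + θ + 2 * y) 2 x := by
    simpa using ((hasDerivAt_id x).const_mul 2).const_add (1 + θ)
  have hq := h1.div h2 hDne
  have hp := (hq.pow 2).const_mul L
  have hfeq : f = fun y : ℝ => L * ((1 + y) / (1 + θ + 2 * y)) ^ 2 := funext hf
  have hderiv : deriv f x =
      L * (2 * ((1 + x) / (1 + θ + 2 * x)) ^ 1 *
        ((1 * (1 + θ + 2 * x) - (1 + x) * 2) / (1 + θ + 2 * x) ^ 2)) := by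
    rw [hfeq]
    exact hp.deriv
  have hx1 : (0:ℝ) < 1 + x := by linarith
  have hfix' : L * (1 + x) ^ 2 = x * (1 + θ + 2 * x) ^ 2 := by
    have := hfix
    rw [hf x] at this
    field_simp at this
    nlinarith [this]
  have hE : deriv f x = 2 * x * (θ - 1) / ((1 + x) * (1 + θ + 2 * x)) := by
    rw [hderiv]
    field_simp
    linear_combination (θ-1) * hfix'
  rw [hE]
  have hden : (0:ℝ) < (1 + x) * (1 + θ + 2 * x) := mul_pos hx1 hD
  rw [abs_of_nonneg (div_nonneg (by nlinarith) hden.le), div_lt_one hden]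
  nlinarith [sq_nonneg (4 * x - (θ - 5)), mul_pos (sub_pos.mpr hθ1) (sub_pos.mpr hθ17)]
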